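/- Let A and B be bounded linear operators on a Banach space such that A - B is invertible, with R = (A-B)⁻¹ and S = R[A,B]R. Then for every real t, e^{tA} = (d/dt)(e^{tA} R e^{-tB}) · e^{tB} - e^{tA} S, where the derivative is taken in operator norm. -/

import Mathlib

open NormedSpace

/-- Exponent derivative representation: if `R = (A-B)⁻¹` and `S = R[A,B]R`, then
`e^{tA} = (d/dt)(e^{tA} R e^{-tB}) e^{tB} - e^{tA} S`. -/
theorem exp_deriv_representation {𝔸 : Type*} [NormedRing 𝔸] [NormedAlgebra ℝ 𝔸]
    [CompleteSpace 𝔸] (A B R S : 𝔸)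
    (h1 : R * (A - B) = 1) (h2 : (A - B) * R = 1)
    (hS : S = R * (A * B - B * A) * R) (t : ℝ) :
    exp (t • A)
      = deriv (fun s : ℝ => exp (s • A) * R * exp (-(s • B))) t * exp (t • B)
        - exp (t • A) * S := by
  set eA := exp (t • A)
  set eB := exp (t • B)
  set eB' := exp (-(t • B))
  -- derivative computation
  have hd1 : HasDerivAt (fun s : ℝ => exp (s • A)) (eA * A) t :=
    hasDerivAt_exp_smul_const A t
  have hd2 : HasDerivAt (fun s : ℝ => exp (-(s • B))) (eB' * (-B)) t := by
    have := hasDerivAt_exp_smul_const (𝕂 := ℝ) (-B) t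
    simpa [smul_neg] using this
  have hd : HasDerivAt (fun s : ℝ => exp (s • A) * R * exp (-(s • B)))
      (eA * A * R * eB' + eA * R * (eB' * (-B))) t :=
    (hd1.mul_const R).mul hd2
  have hderiv : deriv (fun s : ℝ => exp (s • A) * R * exp (-(s • B))) t
      = eA * A * R * eB' + eA * R * (eB' * (-B)) := hd.deriv
  -- exp(-(t•B)) * exp(t•B) = 1
  have hinv : eB' * eB = 1 := by
    letI : NormedAlgebra ℚ 𝔸 := NormedAlgebra.restrictScalars ℚ ℝ 𝔸
    rw [← exp_add_of_commute ((Commute.refl (t • B)).neg_left)]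
    simp
  -- B commutes with eB
  have hcomm : B * eB = eB * B :=
    (((Commute.refl B).smul_right t).exp_right).eq
  -- algebraic key identity
  have key : A * R - R * B = 1 + S := by
    have e1 : A * R = (R * (A - B)) * (A * R) := by rw [h1, one_mul]
    have e2 : R * B = (R * B) * ((A - B) * R) := by rw [h2, mul_one]
    have e3 : (1 : 𝔸) = (R * (A - B)) * ((A - B) * R) := by rw [h1, h2, one_mul]
    rw [hS]
    nth_rewrite 1 [e1, e2]
    conv_rhs => rw [e3]
    noncomm_ring
  rw [hderiv]
  have expand : (eA * A * R * eB' + eA * R * (eB' * (-B))) * eB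
      = eA * (A * R) * (eB' * eB) - eA * R * eB' * (B * eB) := by noncomm_ring
  rw [expand, hcomm, hinv, mul_one,
    show eA * R * eB' * (eB * B) = eA * R * (eB' * eB) * B from by noncomm_ring, hinv]
  calc eA = eA * (1 + S) - eA * S := by noncomm_ring
    _ = eA * (A * R - R * B) - eA * S := by rw [key]
    _ = eA * (A * R) - eA * R * 1 * B - eA * S := by noncomm_ring
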